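/- arXiv:1607.04459 — 4 statements merged into one kernel-verified Lean document; each statement's English description precedes it below -/
import Mathlib

section
/- Let t be a labeled tree in which every node has at most i children, where i ≥ 1. If at every node the children are processed in order of nondecreasing dimension, then the stack requirement of t satisfies S(t) ≤ (i − 1)·dim(t) + 1. -/
/-- A labeled tree: a node carries a label and a (possibly empty) list of children. -/
inductive LTree (L : Type) : Type where
  | node : L → List (LTree L) → LTree L

namespace LTree

/-- The tree dimension: `0` for a leaf; otherwise the maximum `m` of the children's
dimensions if exactly one child attains `m`, and `m + 1` otherwise. -/
def dim {L : Type} : LTree L → ℕ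
  | node _ ts =>
    let ds := ts.attach.map fun x => dim x.1
    if ds = [] then 0
    else
      let m := ds.foldr max 0
      if ds.count m = 1 then m else m + 1
termination_by t => sizeOf t
decreasing_by
  have := List.sizeOf_lt_of_mem x.2
  simp_wf
  omega

/-- The stack requirement of a tree whose children are processed left-to-right
(i.e. the processing order at each node is the order of the children list):
`S(t) = 1` for a leaf, and `S(t) = max_{1 ≤ j ≤ r} (S(t_j) + (r − j))` otherwise
(here realised with 0-based indices, so the summand is `r - 1 - j`). -/
def stackReq {L : Type} : LTree L → ℕ
  | node _ ts =>
    if ts.isEmpty then 1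
    else (ts.attach.zipIdx.map fun p => stackReq p.1.1 + (ts.length - 1 - p.2)).foldr max 0
termination_by t => sizeOf t
decreasing_by
  have := List.sizeOf_lt_of_mem p.1.2
  simp_wf
  omega

/-- Every node of the tree has at most `i` children. -/
def MaxChildren {L : Type} (i : ℕ) : LTree L → Prop
  | node _ ts => ts.length ≤ i ∧ ∀ t ∈ ts, MaxChildren i t
termination_by t => sizeOf t
decreasing_by
  have := List.sizeOf_lt_of_mem (by assumption : t ∈ ts)
  simp_wf
  omega

/-- At every node, the children (in the order in which they are processed) appear in
order of nondecreasing dimension. -/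
def SortedByDim {L : Type} : LTree L → Prop
  | node _ ts => ts.Pairwise (fun a b => dim a ≤ dim b) ∧ ∀ t ∈ ts, SortedByDim t
termination_by t => sizeOf t
decreasing_by
  have := List.sizeOf_lt_of_mem (by assumption : t ∈ ts)
  simp_wf
  omega

end LTree

namespace LTree

private lemma foldr_max_le {l : List ℕ} {B : ℕ} (h : ∀ x ∈ l, x ≤ B) :
    l.foldr max 0 ≤ B := by
  induction l with
  | nil => simp
  | cons a l ih =>
    exact max_le (h a (by simp)) (ih fun x hx => h x (List.mem_cons_of_mem _ hx))

private lemma le_foldr_max {l : List ℕ} {x : ℕ} (h : x ∈ l) : x ≤ l.foldr max 0 := by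
  induction l with
  | nil => simp at h
  | cons a l ih =>
    rcases List.mem_cons.1 h with rfl | h
    · exact le_max_left _ _
    · exact le_trans (ih h) (le_max_right _ _)

private lemma dim_node {L : Type} (c : L) (ts : List (LTree L)) :
    dim (node c ts) = if ts.map dim = [] then 0 else
      if (ts.map dim).count ((ts.map dim).foldr max 0) = 1 then (ts.map dim).foldr max 0
      else (ts.map dim).foldr max 0 + 1 := by
  rw [dim]
  simp only [List.attach_map_val (l := ts) (f := dim)]

private lemma foldr_le_dim_node {L : Type} (c : L) {ts : List (LTree L)} (h : ts ≠ []) :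
    (ts.map dim).foldr max 0 ≤ dim (node c ts) := by
  rw [dim_node]
  rw [if_neg (by simpa using h)]
  split <;> omega

private lemma child_dim_le {L : Type} (c : L) {ts : List (LTree L)} {s : LTree L}
    (hs : s ∈ ts) : dim s ≤ dim (node c ts) := by
  have h1 : dim s ≤ (ts.map dim).foldr max 0 :=
    le_foldr_max (List.mem_map_of_mem (f := dim) hs)
  exact le_trans h1 (foldr_le_dim_node c (by rintro rfl; simp at hs))

private lemma child_dim_lt {L : Type} (c : L) {ts : List (LTree L)}
    (hsort : ts.Pairwise (fun a b => dim a ≤ dim b)) {j : ℕ} (hj : j + 1 < ts.length) :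
    dim ts[j] + 1 ≤ dim (node c ts) := by
  have hne : ts ≠ [] := by rintro rfl; simp at hj
  have hdsne : ts.map dim ≠ [] := by simpa using hne
  have hlen : j + 1 < (ts.map dim).length := by simpa using hj
  have h1 : dim ts[j] ≤ dim ts[j+1] :=
    (List.pairwise_iff_getElem.1 hsort) j (j+1) (by omega) hj (by omega)
  have hgj : (ts.map dim)[j] = dim ts[j] := by simp
  have hgj1 : (ts.map dim)[j+1] = dim ts[j+1] := by simp
  have h2 : dim ts[j+1] ≤ (ts.map dim).foldr max 0 :=
    le_foldr_max (by rw [← hgj1]; exact List.getElem_mem _)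
  rcases eq_or_lt_of_le (le_trans h1 h2) with heq | hlt
  · have hj1m : dim ts[j+1] = (ts.map dim).foldr max 0 := le_antisymm h2 (heq ▸ h1)
    have hdrop : (ts.map dim).drop j =
        (ts.map dim).foldr max 0 :: (ts.map dim).foldr max 0 :: (ts.map dim).drop (j+2) := by
      rw [List.drop_eq_getElem_cons (by omega : j < (ts.map dim).length),
        List.drop_eq_getElem_cons hlen, hgj, hgj1, heq, hj1m]
    have hcount : 2 ≤ (ts.map dim).count ((ts.map dim).foldr max 0) := by
      have := (List.drop_sublist j (ts.map dim)).count_le ((ts.map dim).foldr max 0)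
      rw [hdrop] at this
      simp [List.count_cons_self] at this
      omega
    rw [dim_node, if_neg hdsne, if_neg (by omega)]
    omega
  · have := foldr_le_dim_node c hne
    omega

theorem stackReq_le_aux {L : Type} (i : ℕ) (hi : 1 ≤ i) :
    ∀ t : LTree L, t.MaxChildren i → t.SortedByDim → t.stackReq ≤ (i - 1) * t.dim + 1
  | node c ts, hmax, hsorted => by
    rw [stackReq]
    by_cases hts : ts.isEmpty
    · simp [hts]
    · rw [if_neg hts]
      rw [MaxChildren] at hmax
      rw [SortedByDim] at hsorted
      apply foldr_max_le
      intro x hx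
      simp only [List.mem_map] at hx
      obtain ⟨p, hp, rfl⟩ := hx
      rw [List.mem_zipIdx_iff_getElem?] at hp
      have hlen : p.2 < ts.attach.length := by
        by_contra h
        rw [List.getElem?_eq_none (le_of_not_gt h)] at hp
        exact Option.noConfusion rfl (heq_of_eq hp)
      have hlen' : p.2 < ts.length := by simpa using hlen
      rw [List.getElem?_eq_getElem hlen] at hp
      have hchild : p.1.1 = ts[p.2] := by
        rw [← Option.some_inj.mp hp]
        simp
      rw [hchild]
      have hmem : ts[p.2] ∈ ts := List.getElem_mem _
      have IH : stackReq ts[p.2] ≤ (i - 1) * dim ts[p.2] + 1 :=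
        stackReq_le_aux i hi ts[p.2] (hmax.2 _ hmem) (hsorted.2 _ hmem)
      rcases lt_or_ge (p.2 + 1) ts.length with hlast | hlast
      · have hdl : dim ts[p.2] + 1 ≤ dim (node c ts) := child_dim_lt c hsorted.1 hlast
        have hsub : ts.length - 1 - p.2 ≤ i - 1 := by
          have := hmax.1; omega
        have hmul : (i - 1) * (dim ts[p.2] + 1) ≤ (i - 1) * dim (node c ts) :=
          Nat.mul_le_mul_left _ hdl
        have : (i - 1) * (dim ts[p.2] + 1) = (i - 1) * dim ts[p.2] + (i - 1) := by ring
        omega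
      · have h0 : ts.length - 1 - p.2 = 0 := by omega
        have hdl : dim ts[p.2] ≤ dim (node c ts) := child_dim_le c hmem
        have hmul : (i - 1) * dim ts[p.2] ≤ (i - 1) * dim (node c ts) :=
          Nat.mul_le_mul_left _ hdl
        omega
termination_by t => sizeOf t
decreasing_by
  have := List.sizeOf_lt_of_mem hmem
  simp_wf
  omega

end LTree


/-- Let `t` be a labeled tree in which every node has at most `i` children, where
`i ≥ 1`. If at every node the children are processed in order of nondecreasing
dimension, then the stack requirement of `t` satisfies `S(t) ≤ (i − 1)·dim(t) + 1`. -/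
theorem stackReq_le {L : Type} (i : ℕ) (hi : 1 ≤ i) (t : LTree L)
    (hmax : t.MaxChildren i) (hsorted : t.SortedByDim) :
    t.stackReq ≤ (i - 1) * t.dim + 1 := by
  exact LTree.stackReq_le_aux i hi t hmax hsorted
end

section
/- Let Q be a ground Horn program and k ∈ ℕ. For every derivation tree T for an annotated atom (p^{=d}, a) in Q^{≤k} (0 ≤ d ≤ k), the erasure of T is a derivation tree for (p, a) in Q of dimension exactly d; and for every derivation tree T for (p^{≤d}, a) in Q^{≤k}, the erasure of T is a derivation tree for (p, a) in Q of dimension at most d. -/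
/-- A ground atom: a predicate symbol together with an argument tuple. -/
abbrev GAtom (P A : Type) := P × A

/-- A ground Horn rule: a head atom together with a finite list of body atoms. -/
abbrev GRule (P A : Type) := GAtom P A × List (GAtom P A)

/-- An atom is derivable in a ground Horn program `Q` if it is the head of a rule of
`Q` all of whose body atoms are derivable. -/
inductive Derivable {P A : Type} (Q : Set (GRule P A)) : GAtom P A → Prop
  | intro (r : GRule P A) (hr : r ∈ Q) (hb : ∀ b ∈ r.2, Derivable Q b) :
      Derivable Q r.1

/-- `IsDeriv Q h T` : `T` is a derivation tree for the atom `h` in `Q`: its root label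
is a rule `(h, [b₁,…,b_r]) ∈ Q` and its `r` children are derivation trees for
`b₁,…,b_r` in `Q`, respectively. -/
inductive IsDeriv {P A : Type} (Q : Set (GRule P A)) :
    GAtom P A → LTree (GRule P A) → Prop
  | node (r : GRule P A) (ts : List (LTree (GRule P A))) :
      r ∈ Q → List.Forall₂ (IsDeriv Q) r.2 ts → IsDeriv Q r.1 (.node r ts)

/-- Annotated predicate symbols: `eq p d` stands for `p^{=d}` and `le p d` for `p^{≤d}`. -/
inductive Ann (P : Type) : Type where
  | eq (p : P) (d : ℕ)
  | le (p : P) (d : ℕ)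

/-- The at-most-`k`-dimension program `Q^{≤k}` of a ground Horn program `Q`. -/
def kdim {P A : Type} (Q : Set (GRule P A)) (k : ℕ) : Set (GRule (Ann P) A) :=
  { R |
    -- (1) facts
    (∃ p a, ((p, a), ([] : List (GAtom P A))) ∈ Q ∧ R = ((Ann.eq p 0, a), [])) ∨
    -- (1) linear rules
    (∃ p a q b d, d ≤ k ∧ ((p, a), [(q, b)]) ∈ Q ∧
      R = ((Ann.eq p d, a), [(Ann.eq q d, b)])) ∨
    -- (2a)
    (∃ p a B d j, ((p, a), B) ∈ Q ∧ 1 < B.length ∧ 1 ≤ d ∧ d ≤ k ∧ j < B.length ∧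
      R = ((Ann.eq p d, a),
        (B.zipIdx.map Prod.swap).map fun x =>
          (if x.1 = j then Ann.eq x.2.1 d else Ann.le x.2.1 (d - 1), x.2.2))) ∨
    -- (2b)
    (∃ p a B d j₁ j₂, ((p, a), B) ∈ Q ∧ 1 < B.length ∧ 1 ≤ d ∧ d ≤ k ∧
      j₁ < j₂ ∧ j₂ < B.length ∧
      R = ((Ann.eq p d, a),
        (B.zipIdx.map Prod.swap).map fun x =>
          (if x.1 = j₁ ∨ x.1 = j₂ then Ann.eq x.2.1 (d - 1) else Ann.le x.2.1 (d - 1),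
            x.2.2))) ∨
    -- (3) ε-rules
    (∃ p a d e, e ≤ d ∧ d ≤ k ∧ R = ((Ann.le p d, a), [(Ann.eq p e, a)])) }

/-- Erase the annotation of an annotated atom. -/
def eraseAtom {P A : Type} : GAtom (Ann P) A → GAtom P A
  | (.eq p _, a) => (p, a)
  | (.le p _, a) => (p, a)

/-- Erase the annotations of an annotated rule. -/
def eraseRule {P A : Type} (r : GRule (Ann P) A) : GRule P A :=
  (eraseAtom r.1, r.2.map eraseAtom)

/-- A rule of `Q^{≤k}` is an ε-rule precisely when its head predicate carries a
`≤`-annotation. -/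
def isEpsRule {P A : Type} (r : GRule (Ann P) A) : Bool :=
  match r.1.1 with
  | .le _ _ => true
  | .eq _ _ => false

/-- The erasure of a derivation tree of `Q^{≤k}`: an ε-rule node (recognisable by its
`≤`-annotated head, and having exactly one child) is replaced by the erasure of its
child; at every other node the annotations of the rule labelling it are erased and the
children are erased recursively, in order. -/
def erase {P A : Type} : LTree (GRule (Ann P) A) → LTree (GRule P A)
  | .node r ts =>
    if h : isEpsRule r ∧ ts.length = 1 then
      erase (ts.head (by rcases h with ⟨-, h2⟩; exact List.ne_nil_of_length_pos (by omega)))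
    else .node (eraseRule r) (ts.attach.map fun x => erase x.1)
termination_by t => sizeOf t
decreasing_by
  · simp_wf
    have := List.sizeOf_lt_of_mem (List.head_mem (l := ts)
      (by rcases h with ⟨-, h2⟩; exact List.ne_nil_of_length_pos (by omega)))
    omega
  · have := List.sizeOf_lt_of_mem x.2
    simp_wf
    omega

-- ===== auxiliary lemmas =====

lemma LTree.dim_node_s10 {L : Type} (l : L) (ts : List (LTree L)) :
    LTree.dim (.node l ts) = (if ts.map LTree.dim = [] then 0 else
      if (ts.map LTree.dim).count ((ts.map LTree.dim).foldr max 0) = 1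
      then (ts.map LTree.dim).foldr max 0
      else (ts.map LTree.dim).foldr max 0 + 1) := by
  rw [LTree.dim]
  simp only [List.attach_map_val]

lemma erase_node_noneps {P A : Type} (r : GRule (Ann P) A) (ts : List (LTree (GRule (Ann P) A)))
    (h : isEpsRule r = false) :
    erase (.node r ts) = .node (eraseRule r) (ts.map erase) := by
  rw [erase]
  simp [h, List.attach_map_val]

lemma erase_node_eps {P A : Type} (r : GRule (Ann P) A) (t : LTree (GRule (Ann P) A))
    (h : isEpsRule r = true) :
    erase (.node r [t]) = erase t := by
  rw [erase]
  simp [h]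

lemma le_foldr_max {ds : List ℕ} {x : ℕ} (h : x ∈ ds) : x ≤ ds.foldr max 0 := by
  induction ds with
  | nil => simp at h
  | cons y ys ih =>
    rcases List.mem_cons.1 h with h | h
    · subst h; exact le_max_left _ _
    · exact le_trans (ih h) (le_max_right _ _)

lemma foldr_max_le {ds : List ℕ} {d : ℕ} (h : ∀ x ∈ ds, x ≤ d) : ds.foldr max 0 ≤ d := by
  induction ds with
  | nil => simp
  | cons y ys ih =>
    exact max_le (h y (by simp)) (ih fun x hx => h x (List.mem_cons_of_mem _ hx))

lemma count_eq_one_of_unique : ∀ (ds : List ℕ) (d j : ℕ) (hj : j < ds.length),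
    ds[j] = d → (∀ i (h : i < ds.length), i ≠ j → ds[i] ≠ d) → ds.count d = 1
  | [], d, j, hj => by simp at hj
  | x :: rest, d, j, hj => by
    intro h1 h2
    cases j with
    | zero =>
      simp only [List.getElem_cons_zero] at h1
      subst h1
      rw [List.count_cons_self]
      have h0 : rest.count x = 0 := List.count_eq_zero.2 (by
        intro hmem
        obtain ⟨i, hi, hx⟩ := List.mem_iff_getElem.1 hmem
        exact h2 (i + 1) (by simpa using Nat.succ_lt_succ hi) (by simp)
          (by simpa using hx))
      omega
    | succ j' =>
      have hx : x ≠ d := h2 0 (by simp) (by simp)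
      rw [List.count_cons_of_ne hx]
      exact count_eq_one_of_unique rest d j' (by simpa using hj) (by simpa using h1)
        (fun i hi hij => by
          have := h2 (i + 1) (by simpa using Nat.succ_lt_succ hi) (by simpa using hij)
          simpa using this)

lemma two_le_count : ∀ (ds : List ℕ) (d j₁ j₂ : ℕ) (h12 : j₁ < j₂) (hj₂ : j₂ < ds.length),
    ds[j₁]'(lt_trans h12 hj₂) = d → ds[j₂] = d → 2 ≤ ds.count d
  | [], d, j₁, j₂, h12, hj₂ => by simp at hj₂
  | x :: rest, d, j₁, j₂, h12, hj₂ => by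
    intro h1 h2
    cases j₁ with
    | zero =>
      simp only [List.getElem_cons_zero] at h1
      subst h1
      obtain ⟨j₂', rfl⟩ : ∃ m, j₂ = m + 1 := ⟨j₂ - 1, by omega⟩
      have hmem : x ∈ rest := by
        rw [← h2]
        simp only [List.getElem_cons_succ]
        exact List.getElem_mem _
      have := List.count_pos_iff.2 hmem
      rw [List.count_cons_self]
      omega
    | succ j₁' =>
      obtain ⟨j₂', rfl⟩ : ∃ m, j₂ = m + 1 := ⟨j₂ - 1, by omega⟩
      have := two_le_count rest d j₁' j₂' (by omega) (by simpa using hj₂)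
        (by simpa using h1) (by simpa using h2)
      rw [List.count_cons]
      omega

lemma IsDeriv.inv {P A : Type} {Q : Set (GRule P A)} {h : GAtom P A} {T : LTree (GRule P A)}
    (hD : IsDeriv Q h T) :
    ∃ r ts, r ∈ Q ∧ List.Forall₂ (IsDeriv Q) r.2 ts ∧ h = r.1 ∧ T = .node r ts := by
  cases hD
  exact ⟨_, _, ‹_›, ‹_›, rfl, rfl⟩

theorem erase_aux {P A : Type} (Q : Set (GRule P A)) (k : ℕ) :
    ∀ (n : ℕ) (T : LTree (GRule (Ann P) A)), sizeOf T ≤ n →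
    (∀ p a d, d ≤ k → IsDeriv (kdim Q k) (Ann.eq p d, a) T →
        IsDeriv Q (p, a) (erase T) ∧ (erase T).dim = d) ∧
    (∀ p a d, d ≤ k → IsDeriv (kdim Q k) (Ann.le p d, a) T →
        IsDeriv Q (p, a) (erase T) ∧ (erase T).dim ≤ d) := by
  intro n
  induction n with
  | zero =>
    intro T hT
    cases T
    simp at hT
  | succ n ih =>
    intro T hT
    obtain ⟨r, ts⟩ := T
    have hts : ∀ t ∈ ts, sizeOf t ≤ n := by
      intro t ht
      have h1 := List.sizeOf_lt_of_mem ht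
      simp only [LTree.node.sizeOf_spec] at hT
      omega
    constructor
    · rintro p a d hdk hD
      obtain ⟨r', ts', hrQ, hb, hhead, hnode⟩ := hD.inv
      injection hnode with h1 h2
      subst h1; subst h2
      rcases hrQ with ⟨p', a', hQ, hr⟩ | ⟨p', a', q, b, d', hd'k, hQ, hr⟩ |
        ⟨p', a', B, d', j, hQ, hBlen, hd1, hdk', hj, hr⟩ |
        ⟨p', a', B, d', j₁, j₂, hQ, hBlen, hd1, hdk', hj12, hj2, hr⟩ |
        ⟨p', a', d', e, hed, hd'k, hr⟩ <;> subst hr <;>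
        simp only [Prod.mk.injEq] at hhead
      -- (1) facts
      · obtain ⟨h1, rfl⟩ := hhead
        injection h1 with hp hd
        subst hp; subst hd
        cases hb
        rw [erase_node_noneps _ _ (by rfl)]
        refine ⟨IsDeriv.node ((p, a), []) [] hQ List.Forall₂.nil, ?_⟩
        rw [LTree.dim_node_s10]
        simp
      -- (1) linear
      · obtain ⟨h1, rfl⟩ := hhead
        injection h1 with hp hd
        subst hp; subst hd
        obtain ⟨t, ts0, hder, rfl, hnil⟩ :
            ∃ t ts0, IsDeriv (kdim Q k) (Ann.eq q d, b) t ∧ ts = t :: ts0 ∧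
              List.Forall₂ (IsDeriv (kdim Q k)) [] ts0 := by
          cases hb with
          | cons h1 h2 => exact ⟨_, _, h1, rfl, h2⟩
        cases hnil
        rw [erase_node_noneps _ _ (by rfl)]
        have IH := (ih t (hts t (by simp))).1 q b d hd'k hder
        refine ⟨IsDeriv.node ((p, a), [(q, b)]) [erase t] hQ
          (List.Forall₂.cons IH.1 List.Forall₂.nil), ?_⟩
        rw [LTree.dim_node_s10]
        simp [IH.2]
      -- (2a)
      · obtain ⟨h1, rfl⟩ := hhead
        injection h1 with hp hd
        subst hp; subst hd
        rw [List.forall₂_iff_get] at hb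
        obtain ⟨hlen, hget⟩ := hb
        simp only [List.length_map, List.length_zipIdx] at hlen
        have key : ∀ i (hi : i < ts.length), IsDeriv Q (B[i]'(by omega)) (erase ts[i]) ∧
            ((i = j → (erase ts[i]).dim = d) ∧ (i ≠ j → (erase ts[i]).dim ≤ d - 1)) := by
          intro i hi
          have hiB : i < B.length := by omega
          have hg := hget i (by simpa using hiB) hi
          simp only [List.get_eq_getElem, List.getElem_map, List.getElem_zipIdx, Prod.swap_prod_mk, Nat.zero_add] at hg
          by_cases hij : i = j
          · rw [if_pos hij] at hg
            have := (ih (ts[i]) (hts _ (List.getElem_mem hi))).1 (B[i]'hiB).1 (B[i]'hiB).2 d hdk' hg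
            exact ⟨this.1, fun _ => this.2, fun h => absurd hij h⟩
          · rw [if_neg hij] at hg
            have := (ih (ts[i]) (hts _ (List.getElem_mem hi))).2 (B[i]'hiB).1 (B[i]'hiB).2 (d - 1)
              (by omega) hg
            exact ⟨this.1, fun h => absurd h hij, fun _ => this.2⟩
        rw [erase_node_noneps _ _ (by rfl)]
        have hbody : ((B.zipIdx.map Prod.swap).map fun x =>
            ((if x.1 = j then Ann.eq x.2.1 d else Ann.le x.2.1 (d - 1)), x.2.2)).map eraseAtom
            = B := by
          rw [List.map_map, List.map_map]
          rw [List.map_congr_left (g := Prod.fst) ?_, List.zipIdx_map_fst]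
          rintro ⟨⟨q, b⟩, i⟩ -
          by_cases h : i = j <;> simp [eraseAtom, h]
        have herule : eraseRule ((Ann.eq p d, a), (B.zipIdx.map Prod.swap).map fun x =>
            ((if x.1 = j then Ann.eq x.2.1 d else Ann.le x.2.1 (d - 1)), x.2.2)) = ((p, a), B) := by
          simp only [eraseRule, hbody, eraseAtom]
        rw [herule]
        constructor
        · refine IsDeriv.node ((p, a), B) (ts.map erase) hQ ?_
          rw [List.forall₂_iff_get]
          refine ⟨by simp; omega, ?_⟩
          intro i h1 h2
          simp only [List.get_eq_getElem, List.getElem_map]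
          exact (key i (by simpa using h2)).1
        · rw [LTree.dim_node_s10]
          set ds := (ts.map erase).map LTree.dim with hdsdef
          have hdslen : ds.length = ts.length := by simp [hdsdef]
          have hdsi : ∀ i (h : i < ds.length), ds[i] = (erase (ts[i]'(by omega))).dim := by
            intro i h
            simp [hdsdef]
          have hdsne : ds ≠ [] := by
            have : 0 < ds.length := by omega
            exact List.ne_nil_of_length_pos this
          have hjt : j < ts.length := by omega
          have hmax : ds.foldr max 0 = d := by
            apply le_antisymm
            · apply foldr_max_le
              intro x hx
              obtain ⟨i, hi, rfl⟩ := List.mem_iff_getElem.1 hx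
              rw [hdsi i hi]
              by_cases h : i = j
              · exact le_of_eq ((key i (by omega)).2.1 h)
              · exact le_trans ((key i (by omega)).2.2 h) (by omega)
            · apply le_foldr_max
              exact List.mem_iff_getElem.2 ⟨j, by omega,
                by rw [hdsi j (by omega)]; exact (key j hjt).2.1 rfl⟩
          have hcount : ds.count d = 1 := by
            apply count_eq_one_of_unique ds d j (by omega)
            · rw [hdsi j (by omega)]; exact (key j hjt).2.1 rfl
            · intro i hi hij
              rw [hdsi i hi]
              have := (key i (by omega)).2.2 hij
              omega
          rw [if_neg hdsne, hmax, if_pos hcount]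
      -- (2b)
      · obtain ⟨h1, rfl⟩ := hhead
        injection h1 with hp hd
        subst hp; subst hd
        rw [List.forall₂_iff_get] at hb
        obtain ⟨hlen, hget⟩ := hb
        simp only [List.length_map, List.length_zipIdx] at hlen
        have key : ∀ i (hi : i < ts.length), IsDeriv Q (B[i]'(by omega)) (erase ts[i]) ∧
            (erase ts[i]).dim ≤ d - 1 ∧
            ((i = j₁ ∨ i = j₂) → (erase ts[i]).dim = d - 1) := by
          intro i hi
          have hiB : i < B.length := by omega
          have hg := hget i (by simpa using hiB) hi
          simp only [List.get_eq_getElem, List.getElem_map, List.getElem_zipIdx, Prod.swap_prod_mk, Nat.zero_add] at hg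
          by_cases hij : i = j₁ ∨ i = j₂
          · rw [if_pos hij] at hg
            have := (ih (ts[i]) (hts _ (List.getElem_mem hi))).1 (B[i]'hiB).1 (B[i]'hiB).2 (d - 1)
              (by omega) hg
            exact ⟨this.1, le_of_eq this.2, fun _ => this.2⟩
          · rw [if_neg hij] at hg
            have := (ih (ts[i]) (hts _ (List.getElem_mem hi))).2 (B[i]'hiB).1 (B[i]'hiB).2 (d - 1)
              (by omega) hg
            exact ⟨this.1, this.2, fun h => absurd h hij⟩
        rw [erase_node_noneps _ _ (by rfl)]
        have hbody : ((B.zipIdx.map Prod.swap).map fun x =>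
            ((if x.1 = j₁ ∨ x.1 = j₂ then Ann.eq x.2.1 (d - 1) else Ann.le x.2.1 (d - 1)),
              x.2.2)).map eraseAtom = B := by
          rw [List.map_map, List.map_map]
          rw [List.map_congr_left (g := Prod.fst) ?_, List.zipIdx_map_fst]
          rintro ⟨⟨q, b⟩, i⟩ -
          by_cases h : i = j₁ ∨ i = j₂ <;> simp [eraseAtom, h]
        have herule : eraseRule ((Ann.eq p d, a), (B.zipIdx.map Prod.swap).map fun x =>
            ((if x.1 = j₁ ∨ x.1 = j₂ then Ann.eq x.2.1 (d - 1) else Ann.le x.2.1 (d - 1)),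
              x.2.2)) = ((p, a), B) := by
          simp only [eraseRule, hbody, eraseAtom]
        rw [herule]
        constructor
        · refine IsDeriv.node ((p, a), B) (ts.map erase) hQ ?_
          rw [List.forall₂_iff_get]
          refine ⟨by simp; omega, ?_⟩
          intro i h1 h2
          simp only [List.get_eq_getElem, List.getElem_map]
          exact (key i (by simpa using h2)).1
        · rw [LTree.dim_node_s10]
          set ds := (ts.map erase).map LTree.dim with hdsdef
          have hdslen : ds.length = ts.length := by simp [hdsdef]
          have hdsi : ∀ i (h : i < ds.length), ds[i] = (erase (ts[i]'(by omega))).dim := by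
            intro i h
            simp [hdsdef]
          have hdsne : ds ≠ [] := by
            have : 0 < ds.length := by omega
            exact List.ne_nil_of_length_pos this
          have hj1t : j₁ < ts.length := by omega
          have hmax : ds.foldr max 0 = d - 1 := by
            apply le_antisymm
            · apply foldr_max_le
              intro x hx
              obtain ⟨i, hi, rfl⟩ := List.mem_iff_getElem.1 hx
              rw [hdsi i hi]
              exact (key i (by omega)).2.1
            · apply le_foldr_max
              exact List.mem_iff_getElem.2 ⟨j₁, by omega,
                by rw [hdsi j₁ (by omega)]; exact (key j₁ hj1t).2.2 (Or.inl rfl)⟩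
          have hcount : 2 ≤ ds.count (d - 1) := by
            apply two_le_count ds (d - 1) j₁ j₂ hj12 (by omega)
            · rw [hdsi j₁ (by omega)]; exact (key j₁ hj1t).2.2 (Or.inl rfl)
            · rw [hdsi j₂ (by omega)]; exact (key j₂ (by omega)).2.2 (Or.inr rfl)
          rw [if_neg hdsne, hmax, if_neg (by omega)]
          omega
      -- eps: impossible for eq head
      · exact absurd hhead.1 (by simp)
    · rintro p a d hdk hD
      obtain ⟨r', ts', hrQ, hb, hhead, hnode⟩ := hD.inv
      injection hnode with h1 h2
      subst h1; subst h2
      rcases hrQ with ⟨p', a', hQ, hr⟩ | ⟨p', a', q, b, d', hd'k, hQ, hr⟩ |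
        ⟨p', a', B, d', j, hQ, hBlen, hd1, hdk', hj, hr⟩ |
        ⟨p', a', B, d', j₁, j₂, hQ, hBlen, hd1, hdk', hj12, hj2, hr⟩ |
        ⟨p', a', d', e, hed, hd'k, hr⟩ <;> subst hr <;>
        simp only [Prod.mk.injEq] at hhead
      · exact absurd hhead.1 (by simp)
      · exact absurd hhead.1 (by simp)
      · exact absurd hhead.1 (by simp)
      · exact absurd hhead.1 (by simp)
      · obtain ⟨h1, rfl⟩ := hhead
        injection h1 with hp hd
        subst hp; subst hd
        -- hb : Forall₂ (IsDeriv (kdim Q k)) [(Ann.eq p e, a)] ts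
        obtain ⟨t, ts0, hder, rfl, hnil⟩ :
            ∃ t ts0, IsDeriv (kdim Q k) (Ann.eq p e, a) t ∧ ts = t :: ts0 ∧ List.Forall₂ (IsDeriv (kdim Q k)) [] ts0 := by
          cases hb with
          | cons h1 h2 => exact ⟨_, _, h1, rfl, h2⟩
        cases hnil
        have heps : isEpsRule ((Ann.le p d, a), [(Ann.eq p e, a)]) = true := rfl
        rw [erase_node_eps _ _ heps]
        have := (ih t (hts t (by simp))).1 p a e (le_trans hed hdk) hder
        exact ⟨this.1, this.2 ▸ hed⟩

/-- For every derivation tree `T` for an annotated atom `(p^{=d}, a)` in `Q^{≤k}`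
(`0 ≤ d ≤ k`), the erasure of `T` is a derivation tree for `(p, a)` in `Q` of
dimension exactly `d`; and for every derivation tree `T` for `(p^{≤d}, a)` in
`Q^{≤k}`, the erasure of `T` is a derivation tree for `(p, a)` in `Q` of dimension
at most `d`. -/
theorem erase_isDeriv {P A : Type} (Q : Set (GRule P A)) (k : ℕ) :
    (∀ (p : P) (a : A) (d : ℕ), d ≤ k →
      ∀ T : LTree (GRule (Ann P) A), IsDeriv (kdim Q k) (Ann.eq p d, a) T →
        IsDeriv Q (p, a) (erase T) ∧ (erase T).dim = d) ∧
    (∀ (p : P) (a : A) (d : ℕ), d ≤ k →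
      ∀ T : LTree (GRule (Ann P) A), IsDeriv (kdim Q k) (Ann.le p d, a) T →
        IsDeriv Q (p, a) (erase T) ∧ (erase T).dim ≤ d) := by
  exact ⟨fun p a d hdk T hT => (erase_aux Q k (sizeOf T) T le_rfl).1 p a d hdk hT,
    fun p a d hdk T hT => (erase_aux Q k (sizeOf T) T le_rfl).2 p a d hdk hT⟩
end

section
/- Let Q be a ground Horn program and k ∈ ℕ. If an annotated atom (p^{=d}, a) or (p^{≤d}, a) (with 0 ≤ d ≤ k) is derivable in Q^{≤k}, then the atom (p, a) is derivable in Q. In particular, if a distinguished atom representing false is derivable in Q^{≤k} in annotated form, then it is derivable in Q. -/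
-- Erase annotations.
def erAnn {P A : Type} : GAtom (Ann P) A → GAtom P A
  | (Ann.eq p _, a) => (p, a)
  | (Ann.le p _, a) => (p, a)

theorem derivable_erase {P A : Type} (Q : Set (GRule P A)) (k : ℕ) :
    ∀ x, Derivable (kdim Q k) x → Derivable Q (erAnn x) := by
  intro x h
  induction h with
  | intro r hr hb ih =>
    rcases hr with ⟨p, a, hQ, rfl⟩ | ⟨p, a, q, b, d, hd, hQ, rfl⟩ |
      ⟨p, a, B, d, j, hQ, hlen, hd1, hdk, hj, rfl⟩ |
      ⟨p, a, B, d, j₁, j₂, hQ, hlen, hd1, hdk, hj12, hj2, rfl⟩ |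
      ⟨p, a, d, e, hed, hdk, rfl⟩
    · exact Derivable.intro ((p, a), []) hQ (by simp)
    · refine Derivable.intro ((p, a), [(q, b)]) hQ ?_
      intro y hy
      simp only [List.mem_singleton] at hy
      subst hy
      exact ih (Ann.eq q d, b) (by simp)
    · refine Derivable.intro ((p, a), B) hQ ?_
      intro y hy
      obtain ⟨i, hi, hB⟩ := List.getElem_of_mem hy
      have hmem : ((if i = j then Ann.eq y.1 d else Ann.le y.1 (d - 1)), y.2) ∈
          ((B.zipIdx.map Prod.swap).map fun x =>
            (if x.1 = j then Ann.eq x.2.1 d else Ann.le x.2.1 (d - 1), x.2.2)) := by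
        have : ((B.zipIdx.map Prod.swap).map fun x =>
            (if x.1 = j then Ann.eq x.2.1 d else Ann.le x.2.1 (d - 1), x.2.2))[i]'
            (by simpa using hi) =
            ((if i = j then Ann.eq y.1 d else Ann.le y.1 (d - 1)), y.2) := by
          simp [hB]
        rw [← this]
        exact List.getElem_mem _
      have := ih _ hmem
      by_cases hij : i = j <;> simpa [erAnn, hij] using this
    · refine Derivable.intro ((p, a), B) hQ ?_
      intro y hy
      obtain ⟨i, hi, hB⟩ := List.getElem_of_mem hy
      have hmem : ((if i = j₁ ∨ i = j₂ then Ann.eq y.1 (d - 1) else Ann.le y.1 (d - 1)),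
          y.2) ∈
          ((B.zipIdx.map Prod.swap).map fun x =>
            (if x.1 = j₁ ∨ x.1 = j₂ then Ann.eq x.2.1 (d - 1) else Ann.le x.2.1 (d - 1),
              x.2.2)) := by
        have : ((B.zipIdx.map Prod.swap).map fun x =>
            (if x.1 = j₁ ∨ x.1 = j₂ then Ann.eq x.2.1 (d - 1) else Ann.le x.2.1 (d - 1),
              x.2.2))[i]'(by simpa using hi) =
            ((if i = j₁ ∨ i = j₂ then Ann.eq y.1 (d - 1) else Ann.le y.1 (d - 1)), y.2) := by
          simp [hB]
        rw [← this]
        exact List.getElem_mem _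
      have := ih _ hmem
      by_cases hij : i = j₁ ∨ i = j₂ <;> simpa [erAnn, hij] using this
    · exact ih (Ann.eq p e, a) (by simp)

/-- If an annotated atom `(p^{=d}, a)` or `(p^{≤d}, a)` (with `0 ≤ d ≤ k`) is
derivable in `Q^{≤k}`, then the atom `(p, a)` is derivable in `Q`.  In particular,
taking `(p, a)` to be a distinguished atom representing `false`: if it is derivable
in `Q^{≤k}` in annotated form, then it is derivable in `Q`. -/
theorem derivable_of_derivable_kdim {P A : Type} (Q : Set (GRule P A)) (k : ℕ)
    (p : P) (a : A) (d : ℕ) (hd : d ≤ k)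
    (h : Derivable (kdim Q k) (Ann.eq p d, a) ∨ Derivable (kdim Q k) (Ann.le p d, a)) :
    Derivable Q (p, a) := by
  rcases h with h | h
  · exact derivable_erase Q k _ h
  · exact derivable_erase Q k _ h
end

section
/- Let Q be a ground Horn program and k ∈ ℕ. For every derivation tree T for an atom (p, a) in Q with dim(T) = d ≤ k, there exists a derivation tree T' for (p^{=d}, a) in Q^{≤k} whose erasure is T; moreover, for every e with d ≤ e ≤ k there exists a derivation tree for (p^{≤e}, a) in Q^{≤k} whose erasure is T. -/
namespace IsDerivLiftAux

lemma le_foldr_max (l : List ℕ) : ∀ x ∈ l, x ≤ l.foldr max 0 := by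
  induction l with
  | nil => simp
  | cons a l ih =>
    intro x hx
    rcases List.mem_cons.mp hx with rfl | hx
    · exact le_max_left _ _
    · exact le_trans (ih x hx) (le_max_right _ _)

lemma foldr_max_mem (l : List ℕ) (h : l ≠ []) : l.foldr max 0 ∈ l := by
  induction l with
  | nil => simp at h
  | cons a l ih =>
    rcases eq_or_ne l [] with rfl | hl
    · simp
    · rcases max_cases a (l.foldr max 0) with ⟨h1, _⟩ | ⟨h1, _⟩
      · simp [h1]
      · simp only [List.foldr_cons, h1]
        exact List.mem_cons_of_mem _ (ih hl)

lemma two_le_count {x : ℕ} : ∀ {l : List ℕ} {i j : ℕ} (hi : i < l.length) (hj : j < l.length),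
    i ≠ j → l[i] = x → l[j] = x → 2 ≤ l.count x := by
  intro l
  induction l with
  | nil => intro i j hi; simp at hi
  | cons a l ih =>
    intro i j hi hj hij hx hy
    match i, j with
    | 0, 0 => exact absurd rfl hij
    | 0, j+1 =>
      simp only [List.getElem_cons_zero] at hx
      simp only [List.getElem_cons_succ] at hy
      have hmem : x ∈ l := hy ▸ List.getElem_mem _
      rw [List.count_cons]
      simp [hx]
      exact hmem
    | i+1, 0 =>
      simp only [List.getElem_cons_zero] at hy
      simp only [List.getElem_cons_succ] at hx
      have hmem : x ∈ l := hx ▸ List.getElem_mem _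
      have h1 : 1 ≤ l.count x := List.count_pos_iff.mpr hmem
      rw [List.count_cons]
      simp [hy]
      exact hmem
    | i+1, j+1 =>
      simp only [List.getElem_cons_succ] at hx hy
      have := ih (by simpa using hi) (by simpa using hj) (by omega) hx hy
      rw [List.count_cons]
      omega

lemma exists_two : ∀ {l : List ℕ} {x : ℕ}, 2 ≤ l.count x →
    ∃ i j, ∃ (hij : i < j) (hj : j < l.length),
      l[i]'(hij.trans hj) = x ∧ l[j]'hj = x := by
  intro l
  induction l with
  | nil => simp
  | cons a l ih =>
    intro x h
    rw [List.count_cons] at h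
    by_cases hax : a = x
    · simp [hax] at h
      obtain ⟨j, hj, hxj⟩ := List.mem_iff_getElem.mp h
      exact ⟨0, j+1, by omega, by simpa using hj, by simpa using hax, by simpa using hxj⟩
    · simp [hax] at h
      obtain ⟨i, j, hij, hj, hxi, hxj⟩ := ih h
      exact ⟨i+1, j+1, by omega, by simpa using hj, by simpa using hxi, by simpa using hxj⟩

lemma exists_forall₂ {α β γ : Type} (R : α → β → Prop) (f : β → γ) :
    ∀ (l₁ : List α) (l₂ : List γ), l₁.length = l₂.length →
    (∀ i (h₁ : i < l₁.length) (h₂ : i < l₂.length), ∃ b, R l₁[i] b ∧ f b = l₂[i]) →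
    ∃ l : List β, List.Forall₂ R l₁ l ∧ l.map f = l₂ := by
  intro l₁
  induction l₁ with
  | nil =>
    intro l₂ hlen _
    rw [List.length_nil] at hlen
    obtain rfl := (List.length_eq_zero_iff.mp hlen.symm)
    exact ⟨[], List.Forall₂.nil, rfl⟩
  | cons a l₁ ih =>
    intro l₂ hlen H
    match l₂ with
    | [] => simp at hlen
    | c :: l₂ =>
      obtain ⟨b, hb, hfb⟩ := H 0 (by simp) (by simp)
      obtain ⟨l, hl, hfl⟩ := ih l₂ (by simpa using hlen)
        (fun i h₁ h₂ => H (i+1) (by simpa using h₁) (by simpa using h₂))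
      exact ⟨b :: l, List.Forall₂.cons (by simpa using hb) hl, by simp [hfb, hfl]⟩

lemma attach_map_dim {L : Type} (ts : List (LTree L)) :
    (ts.attach.map fun x => LTree.dim x.1) = ts.map LTree.dim :=
  List.attach_map_val

lemma dim_nil {L : Type} (r : L) : (LTree.node r ([] : List (LTree L))).dim = 0 := by
  rw [LTree.dim]
  simp

lemma dim_node {L : Type} (r : L) (ts : List (LTree L)) (h : ts ≠ []) :
    (LTree.node r ts).dim =
      if (ts.map LTree.dim).count ((ts.map LTree.dim).foldr max 0) = 1
        then (ts.map LTree.dim).foldr max 0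
        else (ts.map LTree.dim).foldr max 0 + 1 := by
  rw [LTree.dim]
  rw [show (ts.attach.map fun x => LTree.dim x.1) = ts.map LTree.dim from attach_map_dim ts]
  rw [if_neg (fun hc => h (List.map_eq_nil_iff.mp hc))]

lemma erase_eq_node {P A : Type} (p : P) (d : ℕ) (a : A) (body : List (GAtom (Ann P) A))
    (ts : List (LTree (GRule (Ann P) A))) :
    erase (.node ((Ann.eq p d, a), body) ts) =
      .node (eraseRule ((Ann.eq p d, a), body)) (ts.map erase) := by
  rw [erase]
  simp [isEpsRule, List.attach_map_val]

lemma erase_le_node {P A : Type} (p : P) (d : ℕ) (a : A) (body : List (GAtom (Ann P) A))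
    (t : LTree (GRule (Ann P) A)) :
    erase (.node ((Ann.le p d, a), body) [t]) = erase t := by
  rw [erase]
  simp [isEpsRule]

lemma step_le {P A : Type} {Q : Set (GRule P A)} {k d e : ℕ} {p : P} {a : A}
    {T' : LTree (GRule (Ann P) A)}
    (h : IsDeriv (kdim Q k) (Ann.eq p d, a) T') (hde : d ≤ e) (hek : e ≤ k) :
    ∃ T'', IsDeriv (kdim Q k) (Ann.le p e, a) T'' ∧ erase T'' = erase T' := by
  refine ⟨.node ((Ann.le p e, a), [(Ann.eq p d, a)]) [T'], ?_, erase_le_node ..⟩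
  exact IsDeriv.node ((Ann.le p e, a), [(Ann.eq p d, a)]) [T']
    (Or.inr <| Or.inr <| Or.inr <| Or.inr ⟨p, a, e, d, hde, hek, rfl⟩)
    (List.Forall₂.cons h List.Forall₂.nil)

lemma eraseRule_body {P A : Type} (p : P) (d : ℕ) (a : A) (B : List (GAtom P A))
    (g : ℕ × GAtom P A → Ann P)
    (hg : ∀ x, (∃ d', g x = Ann.eq x.2.1 d') ∨ (∃ d', g x = Ann.le x.2.1 d')) :
    eraseRule ((Ann.eq p d, a), (B.zipIdx.map Prod.swap).map fun x => (g x, x.2.2)) = ((p, a), B) := by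
  unfold eraseRule
  simp only [List.map_map]
  have h1 : eraseAtom (Ann.eq p d, a) = (p, a) := rfl
  rw [h1]
  have h2 : ∀ x ∈ B.zipIdx, (eraseAtom ∘ (fun x => (g x, x.2.2)) ∘ Prod.swap) x = Prod.fst x := by
    intro x _
    rcases hg x.swap with ⟨d', h⟩ | ⟨d', h⟩ <;> simp [Function.comp, h, eraseAtom]
  congr 1
  exact (List.map_congr_left h2).trans (List.zipIdx_map_fst 0 B)
lemma isDeriv_inv {P A : Type} {Q : Set (GRule P A)} {h : GAtom P A} {T : LTree (GRule P A)}
    (hT : IsDeriv Q h T) :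
    ∃ B ts, T = .node (h, B) ts ∧ (h, B) ∈ Q ∧ List.Forall₂ (IsDeriv Q) B ts := by
  cases hT with
  | node r ts hr hb => exact ⟨r.2, ts, rfl, hr, hb⟩

lemma lift_eq {P A : Type} (Q : Set (GRule P A)) (k : ℕ) :
    ∀ (n : ℕ) (T : LTree (GRule P A)), sizeOf T ≤ n → ∀ (p : P) (a : A),
      IsDeriv Q (p, a) T → T.dim ≤ k →
      ∃ T', IsDeriv (kdim Q k) (Ann.eq p T.dim, a) T' ∧ erase T' = T := by
  intro n
  induction n with
  | zero =>
    intro T hsize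
    cases T with
    | node r ts => simp at hsize
  | succ n ih =>
    intro T hsize p a hT hdim
    obtain ⟨B, ts, rfl, hrQ, hb⟩ := isDeriv_inv hT
    have hlen : B.length = ts.length := hb.length_eq
    have hsub : ∀ t ∈ ts, sizeOf t ≤ n := by
      intro t ht
      have h1 := List.sizeOf_lt_of_mem ht
      have h2 : sizeOf (LTree.node ((p, a), B) ts) = 1 + sizeOf ((p, a), B) + sizeOf ts := by
        simp
      omega
    have hder : ∀ i (h1 : i < B.length) (h2 : i < ts.length), IsDeriv Q B[i] ts[i] := by
      intro i h1 h2
      have := (List.forall₂_iff_get.mp hb).2 i h1 h2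
      simpa using this
    by_cases h0 : ts = []
    · subst h0
      obtain rfl : B = [] := by simpa using hlen
      simp only [dim_nil]
      refine ⟨.node ((Ann.eq p 0, a), []) [], ?_, ?_⟩
      · exact IsDeriv.node ((Ann.eq p 0, a), []) [] (Or.inl ⟨p, a, hrQ, rfl⟩) List.Forall₂.nil
      · rw [erase_eq_node]
        simp [eraseRule, eraseAtom]
    by_cases h1 : ts.length = 1
    · obtain ⟨t, rfl⟩ := List.length_eq_one_iff.mp h1
      obtain ⟨qb, rfl⟩ : ∃ qb, B = [qb] := List.length_eq_one_iff.mp (by omega)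
      have hqt : IsDeriv Q qb t := by simpa using hder 0 (by simp) (by simp)
      have hdt : (LTree.node ((p, a), [qb]) [t]).dim = t.dim := by
        rw [dim_node _ _ (by simp)]
        simp
      rw [hdt] at hdim ⊢
      obtain ⟨T1, hT1, hE1⟩ := ih t (hsub t (by simp)) qb.1 qb.2 hqt hdim
      refine ⟨.node ((Ann.eq p t.dim, a), [(Ann.eq qb.1 t.dim, qb.2)]) [T1], ?_, ?_⟩
      · exact IsDeriv.node ((Ann.eq p t.dim, a), [(Ann.eq qb.1 t.dim, qb.2)]) [T1]
          (Or.inr <| Or.inl ⟨p, a, qb.1, qb.2, t.dim, hdim, hrQ, rfl⟩)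
          (List.Forall₂.cons hT1 List.Forall₂.nil)
      · rw [erase_eq_node]
        simp [eraseRule, eraseAtom, hE1]
    -- general case: 2 ≤ ts.length
    have h2len : 2 ≤ ts.length := by
      rcases ts with _ | ⟨t, ts'⟩
      · simp at h0
      · rcases ts' with _ | ⟨t2, ts''⟩
        · simp at h1
        · simp only [List.length_cons]; omega
    set ds := ts.map LTree.dim with hds
    set m := ds.foldr max 0 with hm
    have hdslen : ds.length = ts.length := by simp [hds]
    have hmem : m ∈ ds := foldr_max_mem ds (by simpa [hds] using h0)
    have hall : ∀ i (hi : i < ts.length), (ts[i]).dim ≤ m := by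
      intro i hi
      refine le_foldr_max ds _ ?_
      have : ds[i]'(by omega) = (ts[i]).dim := by simp [hds]
      exact this ▸ List.getElem_mem _
    have hdsi : ∀ i (hi : i < ds.length), ds[i] = (ts[i]'(by omega)).dim := by
      intro i hi; simp [hds]
    obtain ⟨j₀, hj₀, hdsj₀⟩ := List.mem_iff_getElem.mp hmem
    have hj₀t : j₀ < ts.length := by omega
    have hdimj₀ : (ts[j₀]).dim = m := by rw [← hdsi j₀ hj₀]; exact hdsj₀
    by_cases hc : ds.count m = 1
    · -- dimension m, rule (2a)
      have hdT : (LTree.node ((p, a), B) ts).dim = m := by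
        rw [dim_node _ _ h0, ← hds, ← hm, if_pos hc]
      rw [hdT] at hdim ⊢
      have hm1 : 1 ≤ m := by
        by_contra hm0
        have hm0 : m = 0 := by omega
        have : ds.count m = ds.length := List.count_eq_length.mpr (by
          intro b hbmem
          have := le_foldr_max ds b hbmem
          omega)
        omega
      set B' := (B.zipIdx.map Prod.swap).map (fun x : ℕ × GAtom P A =>
        ((if x.1 = j₀ then Ann.eq x.2.1 m else Ann.le x.2.1 (m - 1), x.2.2) : GAtom (Ann P) A))
        with hB'
      have hmemRule : ((Ann.eq p m, a), B') ∈ kdim Q k :=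
        Or.inr <| Or.inr <| Or.inl ⟨p, a, B, m, j₀, hrQ, by omega, hm1, hdim, by omega, rfl⟩
      have hlen' : B'.length = ts.length := by simp [hB', hlen]
      have H : ∀ i (h₁ : i < B'.length) (h₂ : i < ts.length),
          ∃ b, IsDeriv (kdim Q k) (B'[i]) b ∧ erase b = ts[i] := by
        intro i hi1 hi2
        have hBi : i < B.length := by omega
        have hB'i : B'[i] = ((if i = j₀ then Ann.eq (B[i].1) m else Ann.le (B[i].1) (m - 1),
            B[i].2) : GAtom (Ann P) A) := by
          simp [hB']
        rw [hB'i]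
        by_cases hij : i = j₀
        · subst hij
          simp only [if_pos rfl]
          have hdimi : (ts[i]).dim = m := hdimj₀
          obtain ⟨T1, hT1, hE1⟩ := ih (ts[i]) (hsub _ (List.getElem_mem _)) (B[i].1) (B[i].2)
            (hder i hBi hi2) (by rw [hdimi]; exact hdim)
          exact ⟨T1, hdimi ▸ hT1, hE1⟩
        · simp only [if_neg hij]
          have hne : (ts[i]).dim ≠ m := by
            intro hEq
            have h2c : 2 ≤ ds.count m :=
              two_le_count (l := ds) (x := m) (i := i) (j := j₀) (by omega) hj₀ (by omega)
                (by rw [hdsi i (by omega)]; exact hEq) (by rw [hdsi j₀ hj₀]; exact hdimj₀)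
            omega
          have hlt : (ts[i]).dim ≤ m - 1 := by
            have := hall i hi2
            omega
          obtain ⟨T1, hT1, hE1⟩ := ih (ts[i]) (hsub _ (List.getElem_mem _)) (B[i].1) (B[i].2)
            (hder i hBi hi2) (by have := hall i hi2; omega)
          obtain ⟨T2, hT2, hE2⟩ := step_le hT1 hlt (by omega)
          exact ⟨T2, hT2, by rw [hE2, hE1]⟩
      obtain ⟨ts', hts1, hts2⟩ := exists_forall₂ _ erase B' ts (by rw [hlen']) H
      refine ⟨.node ((Ann.eq p m, a), B') ts', IsDeriv.node _ _ hmemRule hts1, ?_⟩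
      rw [erase_eq_node, hts2, eraseRule_body p m a B _ (fun x => by
        by_cases hx : x.1 = j₀
        · exact Or.inl ⟨m, by simp [hx]⟩
        · exact Or.inr ⟨m - 1, by simp [hx]⟩)]
    · -- dimension m + 1, rule (2b)
      have hdT : (LTree.node ((p, a), B) ts).dim = m + 1 := by
        rw [dim_node _ _ h0, ← hds, ← hm, if_neg hc]
      rw [hdT] at hdim ⊢
      have h2c : 2 ≤ ds.count m := by
        have h1c : 1 ≤ ds.count m := List.count_pos_iff.mpr hmem
        omega
      obtain ⟨j₁, j₂, hj12, hj₂, hd1, hd2⟩ := exists_two h2c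
      have hj₂t : j₂ < ts.length := by omega
      have hj₁t : j₁ < ts.length := by omega
      have hdim1 : (ts[j₁]).dim = m := by rw [← hdsi j₁ (by omega)]; exact hd1
      have hdim2 : (ts[j₂]).dim = m := by rw [← hdsi j₂ hj₂]; exact hd2
      set B' := (B.zipIdx.map Prod.swap).map (fun x : ℕ × GAtom P A =>
        ((if x.1 = j₁ ∨ x.1 = j₂ then Ann.eq x.2.1 m else Ann.le x.2.1 m, x.2.2) :
          GAtom (Ann P) A)) with hB'
      have hmemRule : ((Ann.eq p (m + 1), a), B') ∈ kdim Q k :=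
        Or.inr <| Or.inr <| Or.inr <| Or.inl
          ⟨p, a, B, m + 1, j₁, j₂, hrQ, by omega, by omega, hdim, hj12, by omega, by simp [hB']⟩
      have hlen' : B'.length = ts.length := by simp [hB', hlen]
      have H : ∀ i (h₁ : i < B'.length) (h₂ : i < ts.length),
          ∃ b, IsDeriv (kdim Q k) (B'[i]) b ∧ erase b = ts[i] := by
        intro i hi1 hi2
        have hBi : i < B.length := by omega
        have hB'i : B'[i] = ((if i = j₁ ∨ i = j₂ then Ann.eq (B[i].1) m else Ann.le (B[i].1) m,
            B[i].2) : GAtom (Ann P) A) := by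
          simp [hB']
        rw [hB'i]
        by_cases hij : i = j₁ ∨ i = j₂
        · simp only [if_pos hij]
          have hdimi : (ts[i]).dim = m := by
            rcases hij with rfl | rfl
            · exact hdim1
            · exact hdim2
          obtain ⟨T1, hT1, hE1⟩ := ih (ts[i]) (hsub _ (List.getElem_mem _)) (B[i].1) (B[i].2)
            (hder i hBi hi2) (by omega)
          exact ⟨T1, hdimi ▸ hT1, hE1⟩
        · simp only [if_neg hij]
          obtain ⟨T1, hT1, hE1⟩ := ih (ts[i]) (hsub _ (List.getElem_mem _)) (B[i].1) (B[i].2)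
            (hder i hBi hi2) (by have := hall i hi2; omega)
          obtain ⟨T2, hT2, hE2⟩ := step_le hT1 (hall i hi2) (by omega)
          exact ⟨T2, hT2, by rw [hE2, hE1]⟩
      obtain ⟨ts', hts1, hts2⟩ := exists_forall₂ _ erase B' ts (by rw [hlen']) H
      refine ⟨.node ((Ann.eq p (m + 1), a), B') ts', IsDeriv.node _ _ hmemRule hts1, ?_⟩
      rw [erase_eq_node, hts2, eraseRule_body p (m + 1) a B _ (fun x => by
        by_cases hx : x.1 = j₁ ∨ x.1 = j₂
        · exact Or.inl ⟨m, by simp [hx]⟩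
        · exact Or.inr ⟨m, by simp [hx]⟩)]

end IsDerivLiftAux


/-- For every derivation tree `T` for an atom `(p, a)` in `Q` with `dim T = d ≤ k`,
there exists a derivation tree `T'` for `(p^{=d}, a)` in `Q^{≤k}` whose erasure is
`T`; moreover, for every `e` with `d ≤ e ≤ k` there exists a derivation tree for
`(p^{≤e}, a)` in `Q^{≤k}` whose erasure is `T`. -/
theorem isDeriv_lift {P A : Type} (Q : Set (GRule P A)) (k : ℕ)
    (p : P) (a : A) (T : LTree (GRule P A))
    (hT : IsDeriv Q (p, a) T) (hdim : T.dim ≤ k) :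
    (∃ T' : LTree (GRule (Ann P) A),
        IsDeriv (kdim Q k) (Ann.eq p T.dim, a) T' ∧ erase T' = T) ∧
    (∀ e, T.dim ≤ e → e ≤ k →
      ∃ T' : LTree (GRule (Ann P) A),
        IsDeriv (kdim Q k) (Ann.le p e, a) T' ∧ erase T' = T) := by
  constructor
  · exact IsDerivLiftAux.lift_eq Q k (sizeOf T) T le_rfl p a hT hdim
  · intro e he hek
    obtain ⟨T1, hT1, hE1⟩ := IsDerivLiftAux.lift_eq Q k (sizeOf T) T le_rfl p a hT hdim
    obtain ⟨T2, hT2, hE2⟩ := IsDerivLiftAux.step_le hT1 he hek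
    exact ⟨T2, hT2, by rw [hE2, hE1]⟩
end
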